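/- Let m ≥ 3, let P and Q be symmetric 2-index arrays on ℝ^m and let v ∈ ℝ^m with v ≠ 0. If D(P,v) = 0 and D(Q,v) = 0, then P and Q commute: Σ_l P_{il}Q_{lj} = Σ_l Q_{il}P_{lj} for all i, j. -/

import Mathlib

/-- The Kronecker delta on `Fin m`, regarded as a real 2-index array. -/
def kdelta (m : ℕ) (i j : Fin m) : ℝ := if i = j then 1 else 0

/-- The 3-index array `D(P,v)` associated with a 2-index array `P` and a vector `v`:
`D(P,v)_{ijk} = (1/(m−2))·[ v_k P_{ij} − v_j P_{ik}
  + (1/(m−1))·Σ_l v_l (P_{lk}δ_{ij} − P_{lj}δ_{ik})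
  − ((Σ_l P_{ll})/(m−1))·(v_kδ_{ij} − v_jδ_{ik}) ]`. -/
noncomputable def Dt (m : ℕ) (P : Fin m → Fin m → ℝ) (v : Fin m → ℝ)
    (i j k : Fin m) : ℝ :=
  (1 / ((m : ℝ) - 2)) *
    (v k * P i j - v j * P i k
      + (1 / ((m : ℝ) - 1)) * ∑ l, v l * (P l k * kdelta m i j - P l j * kdelta m i k)
      - ((∑ l, P l l) / ((m : ℝ) - 1)) * (v k * kdelta m i j - v j * kdelta m i k))


lemma kdelta_symm (m : ℕ) (i j : Fin m) : kdelta m i j = kdelta m j i := by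
  simp [kdelta, eq_comm]

lemma structure_of_Dt (m : ℕ) (hm : 3 ≤ m)
    (P : Fin m → Fin m → ℝ) (hP : ∀ i j, P i j = P j i)
    (v : Fin m → ℝ) (hv : v ≠ 0)
    (hDP : ∀ i j k, Dt m P v i j k = 0) :
    ∃ a b : ℝ, ∀ i j, P i j = a * kdelta m i j + b * (v i * v j) := by
  have hm3 : (3:ℝ) ≤ (m:ℝ) := by exact_mod_cast hm
  have hm1 : (m:ℝ) - 1 ≠ 0 := ne_of_gt (by linarith)
  have hm2 : (m:ℝ) - 2 ≠ 0 := ne_of_gt (by linarith)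
  obtain ⟨a0, ha0⟩ : ∃ a, v a ≠ 0 := Function.ne_iff.mp hv
  set S : ℝ := ∑ l, v l * v l with hSdef
  have hS : 0 < S := Finset.sum_pos' (fun i _ => mul_self_nonneg (v i))
    ⟨a0, Finset.mem_univ a0, mul_self_pos.mpr ha0⟩
  set w : Fin m → ℝ := fun k => ∑ l, v l * P l k with hwdef
  set t : ℝ := ∑ l, P l l with htdef
  set c : Fin m → ℝ := fun k => (t * v k - w k) / ((m:ℝ) - 1) with hcdef
  -- step 1: the key relation
  have E : ∀ i j k, v k * P i j - v j * P i k
      = c k * kdelta m i j - c j * kdelta m i k := by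
    intro i j k
    have h := hDP i j k
    unfold Dt at h
    have hsum : ∑ l, v l * (P l k * kdelta m i j - P l j * kdelta m i k)
        = w k * kdelta m i j - w j * kdelta m i k := by
      simp only [hwdef, mul_sub, Finset.sum_sub_distrib, Finset.sum_mul]
      ring_nf
      congr 1 <;> exact Finset.sum_congr rfl (fun l _ => by ring)
    rw [hsum] at h
    have h0 : v k * P i j - v j * P i k
        + (1 / ((m : ℝ) - 1)) * (w k * kdelta m i j - w j * kdelta m i k)
        - (t / ((m : ℝ) - 1)) * (v k * kdelta m i j - v j * kdelta m i k) = 0 := by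
      rcases mul_eq_zero.mp h with h' | h'
      · exact absurd h' (one_div_ne_zero hm2)
      · exact h'
    simp only [hcdef]
    linear_combination h0
  -- step 2: contract with v
  have star : ∀ i j, S * P i j
      = v j * w i + (∑ k, v k * c k) * kdelta m i j - c j * v i := by
    intro i j
    have h1 : ∑ k, v k * (v k * P i j - v j * P i k)
        = ∑ k, v k * (c k * kdelta m i j - c j * kdelta m i k) :=
      Finset.sum_congr rfl (fun k _ => by rw [E i j k])
    have hL : ∑ k, v k * (v k * P i j - v j * P i k) = S * P i j - v j * w i := by
      have h2 : ∀ k : Fin m, v k * (v k * P i j - v j * P i k)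
          = (v k * v k) * P i j - v j * (v k * P k i) := by
        intro k; rw [hP i k]; ring
      rw [Finset.sum_congr rfl (fun k _ => h2 k), Finset.sum_sub_distrib,
        ← Finset.sum_mul, ← Finset.mul_sum]
    have hR : ∑ k, v k * (c k * kdelta m i j - c j * kdelta m i k)
        = (∑ k, v k * c k) * kdelta m i j - c j * v i := by
      have h3 : ∀ k : Fin m, v k * (c k * kdelta m i j - c j * kdelta m i k)
          = (v k * c k) * kdelta m i j - c j * (if i = k then v k else 0) := by
        intro k
        simp only [kdelta]
        split_ifs <;> ring
      rw [Finset.sum_congr rfl (fun k _ => h3 k), Finset.sum_sub_distrib,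
        ← Finset.sum_mul, ← Finset.mul_sum, Finset.sum_ite_eq]
      simp
    rw [hL, hR] at h1
    linarith
  -- step 3: w + c is proportional to v
  set μ := (w a0 + c a0) / v a0 with hμdef
  have hwc : ∀ i, w i + c i = μ * v i := by
    intro i
    have h1 := star i a0
    have h2 := star a0 i
    rw [hP a0 i] at h2
    rw [kdelta_symm m a0 i] at h2
    have h3 : v a0 * (w i + c i) = v i * (w a0 + c a0) := by linarith
    rw [hμdef]
    field_simp
    linarith
  -- step 4: c and w are proportional to v
  set κ := (t - μ) / ((m:ℝ) - 2) with hκdef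
  have hc : ∀ i, c i = κ * v i := by
    intro i
    have h1 : ((m:ℝ) - 1) * c i = t * v i - w i := by
      rw [hcdef]; field_simp
    have h2 := hwc i
    rw [hκdef]
    field_simp
    linarith
  have hw : ∀ i, w i = (μ - κ) * v i := by
    intro i
    have := hwc i
    have := hc i
    linarith
  -- step 5: conclude
  refine ⟨κ, (μ - 2 * κ) / S, fun i j => ?_⟩
  have h1 := star i j
  rw [hw i, hc j] at h1
  have h2 : ∑ k, v k * c k = κ * S := by
    rw [hSdef, Finset.mul_sum]
    exact Finset.sum_congr rfl (fun k _ => by rw [hc k]; ring)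
  rw [h2] at h1
  have hS' : S ≠ 0 := ne_of_gt hS
  field_simp
  linear_combination h1

lemma prod_sum (m : ℕ) (v : Fin m → ℝ) (i j : Fin m) (a b a' b' : ℝ) :
    ∑ l, (a * kdelta m i l + b * (v i * v l)) * (a' * kdelta m l j + b' * (v l * v j))
      = a * a' * kdelta m i j + (a * b' + b * a') * (v i * v j)
        + b * b' * (∑ l, v l * v l) * (v i * v j) := by
  have h : ∀ l : Fin m,
      (a * kdelta m i l + b * (v i * v l)) * (a' * kdelta m l j + b' * (v l * v j))
      = (if i = l then a * (a' * kdelta m l j) + a * b' * (v l * v j) else 0)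
        + (if l = j then b * a' * (v i * v l) else 0)
        + b * b' * (v i * v j) * (v l * v l) := by
    intro l
    simp only [kdelta]
    split_ifs <;> ring
  rw [Finset.sum_congr rfl (fun l _ => h l)]
  rw [Finset.sum_add_distrib, Finset.sum_add_distrib, Finset.sum_ite_eq,
    Finset.sum_ite_eq', ← Finset.mul_sum]
  simp only [Finset.mem_univ, if_true, kdelta]
  split_ifs with hij <;> subst_eqs <;> ring

/-- If `D(P,v) = 0` and `D(Q,v) = 0` for some nonzero vector `v`, then the symmetric
arrays `P` and `Q` commute. -/
theorem commute_of_Dt_eq_zero (m : ℕ) (hm : 3 ≤ m)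
    (P Q : Fin m → Fin m → ℝ)
    (hP : ∀ i j, P i j = P j i) (hQ : ∀ i j, Q i j = Q j i)
    (v : Fin m → ℝ) (hv : v ≠ 0)
    (hDP : ∀ i j k, Dt m P v i j k = 0) (hDQ : ∀ i j k, Dt m Q v i j k = 0) :
    ∀ i j, (∑ l, P i l * Q l j) = ∑ l, Q i l * P l j := by
  obtain ⟨a, b, hPf⟩ := structure_of_Dt m hm P hP v hv hDP
  obtain ⟨a', b', hQf⟩ := structure_of_Dt m hm Q hQ v hv hDQ
  intro i j
  have h1 : (∑ l, P i l * Q l j)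
      = ∑ l, (a * kdelta m i l + b * (v i * v l)) * (a' * kdelta m l j + b' * (v l * v j)) :=
    Finset.sum_congr rfl (fun l _ => by rw [hPf i l, hQf l j])
  have h2 : (∑ l, Q i l * P l j)
      = ∑ l, (a' * kdelta m i l + b' * (v i * v l)) * (a * kdelta m l j + b * (v l * v j)) :=
    Finset.sum_congr rfl (fun l _ => by rw [hQf i l, hPf l j])
  rw [h1, h2, prod_sum, prod_sum]
  ring
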